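/- If H is a linear forest (a disjoint union of paths), then a graph G contains H as an induced subgraph if and only if G contains H as an induced minor. -/

import Mathlib

/-- `H` is an induced minor of `G`. -/
def IsInducedMinor {V W : Type*} (G : SimpleGraph V) (H : SimpleGraph W) : Prop :=
  ∃ B : W → Set V,
    (∀ w, (G.induce (B w)).Connected) ∧
    (∀ w w', w ≠ w' → Disjoint (B w) (B w')) ∧
    (∀ w w', w ≠ w' → (H.Adj w w' ↔ ∃ a ∈ B w, ∃ b ∈ B w', G.Adj a b))

/-- The linear forest which is the disjoint union of `n` paths, where the `i`-th
path has `l i` vertices. -/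
def linForest (n : ℕ) (l : Fin n → ℕ) : SimpleGraph (Σ i : Fin n, Fin (l i)) :=
  SimpleGraph.fromRel (fun a b => a.1 = b.1 ∧ a.2.val + 1 = b.2.val)

lemma linAdj (n : ℕ) (l : Fin n → ℕ) (a b : Σ i : Fin n, Fin (l i)) :
    (linForest n l).Adj a b ↔
      a.1 = b.1 ∧ (a.2.val + 1 = b.2.val ∨ b.2.val + 1 = a.2.val) := by
  unfold linForest
  rw [SimpleGraph.fromRel_adj]
  constructor
  · rintro ⟨hne, h | h⟩
    · exact ⟨h.1, Or.inl h.2⟩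
    · exact ⟨h.1.symm, Or.inr h.2⟩
  · rintro ⟨h1, h2⟩
    refine ⟨?_, ?_⟩
    · rintro rfl; omega
    · rcases h2 with h | h
      · exact Or.inl ⟨h1, h⟩
      · exact Or.inr ⟨h1.symm, h⟩

/-- A walk inside an induced-connected set, as a list of vertices. -/
lemma walkList {V : Type*} (G : SimpleGraph V) (s : Set V)
    (hc : (G.induce s).Connected) {x y : V} (hx : x ∈ s) (hy : y ∈ s) :
    ∃ M : List V, M.Chain' G.Adj ∧ (∀ v ∈ M, v ∈ s) ∧
      M.head? = some x ∧ M.getLast? = some y := by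
  obtain ⟨w⟩ := hc.preconnected ⟨x, hx⟩ ⟨y, hy⟩
  refine ⟨w.support.map Subtype.val, ?_, ?_, ?_, ?_⟩
  · exact List.isChain_map_of_isChain Subtype.val (fun a b hab => hab) w.isChain_adj_support
  · intro v hv
    simp only [List.mem_map] at hv
    obtain ⟨⟨u, hu⟩, _, rfl⟩ := hv
    exact hu
  · rw [List.head?_map]
    have : w.support.head? = some (⟨x, hx⟩ : s) := by cases w <;> simp
    rw [this]; rfl
  · rw [List.getLast?_map,
      List.getLast?_eq_getLast w.support_ne_nil, w.getLast_support]
    rfl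

lemma idxBound {α : Type*} (f : α → ℕ) (L : List α)
    (h : ∀ i (hi : i + 1 < L.length), f (L[i+1]) ≤ f (L[i]'(by omega)) + 1) :
    ∀ i (hi : i < L.length), f (L[i]) ≤ f (L[0]'(by omega)) + i := by
  intro i
  induction i with
  | zero => intro hi; simp
  | succ i ih =>
    intro hi
    have h1 := h i hi
    have h2 := ih (by omega)
    omega

lemma pathLemma {V : Type*} {G : SimpleGraph V} {k : ℕ} (hk : 0 < k)
    (B : Fin k → Set V)
    (hconn : ∀ t, (G.induce (B t)).Connected)
    (hdisj : ∀ s t, s ≠ t → Disjoint (B s) (B t))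
    (hadj : ∀ s t : Fin k, s ≠ t →
      ((∃ a ∈ B s, ∃ b ∈ B t, G.Adj a b) ↔ (s.val + 1 = t.val ∨ t.val + 1 = s.val))) :
    ∃ g : Fin k → V, (∀ j, ∃ t, g j ∈ B t) ∧ Function.Injective g ∧
      (∀ s t : Fin k, G.Adj (g s) (g t) ↔ (s.val + 1 = t.val ∨ t.val + 1 = s.val)) := by
  classical
  set z0 : Fin k := ⟨0, hk⟩ with hz0
  set z1 : Fin k := ⟨k - 1, by omega⟩ with hz1
  have build : ∀ (j : ℕ) (hj : j < k), ∀ y ∈ B ⟨j, hj⟩,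
      ∃ L : List V, L.Chain' G.Adj ∧ (∀ v ∈ L, ∃ t, v ∈ B t) ∧
        (∃ h, L.head? = some h ∧ h ∈ B z0) ∧ L.getLast? = some y := by
    intro j
    induction j with
    | zero =>
      intro hj y hy
      refine ⟨[y], List.isChain_singleton y, ?_, ⟨y, by simp, hy⟩, by simp⟩
      intro v hv
      simp only [List.mem_singleton] at hv
      subst hv
      exact ⟨_, hy⟩
    | succ j ih =>
      intro hj y hy
      have hj' : j < k := by omega
      have hne : (⟨j, hj'⟩ : Fin k) ≠ ⟨j + 1, hj⟩ := by
        intro h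
        have := Fin.mk.injEq .. ▸ h
        simp [Fin.ext_iff] at h
      obtain ⟨a, ha, b, hb, hab⟩ := (hadj _ _ hne).mpr (Or.inl rfl)
      obtain ⟨L₁, hc1, hm1, hh1, hl1⟩ := ih hj' a ha
      obtain ⟨M, hcM, hmM, hhM, hlM⟩ := walkList G (B ⟨j + 1, hj⟩) (hconn _) hb hy
      have hL1ne : L₁ ≠ [] := by
        intro h; rw [h] at hl1; simp at hl1
      have hMne : M ≠ [] := by
        intro h; rw [h] at hhM; simp at hhM
      refine ⟨L₁ ++ M, ?_, ?_, ?_, ?_⟩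
      · apply List.isChain_append.mpr
        refine ⟨hc1, hcM, ?_⟩
        intro x hx y' hy'
        rw [hl1] at hx
        rw [hhM] at hy'
        simp only [Option.mem_def, Option.some.injEq] at hx hy'
        rw [← hx, ← hy']
        exact hab
      · intro v hv
        rcases List.mem_append.mp hv with h | h
        · exact hm1 v h
        · exact ⟨_, hmM v h⟩
      · obtain ⟨h, hh, hB⟩ := hh1
        refine ⟨h, ?_, hB⟩
        rw [List.head?_append, hh]
        rfl
      · rw [List.getLast?_append, hlM]
        rfl
  obtain ⟨⟨y, hy⟩⟩ := (hconn z1).nonempty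
  obtain ⟨L0, c0, m0, h0, l0⟩ := build (k - 1) (by omega) y hy
  have hex : ∃ m, ∃ L : List V,
      (L.Chain' G.Adj ∧ (∀ v ∈ L, ∃ t, v ∈ B t) ∧
        (∃ h, L.head? = some h ∧ h ∈ B z0) ∧
        (∃ e, L.getLast? = some e ∧ e ∈ B z1)) ∧ L.length = m :=
    ⟨L0.length, L0, ⟨c0, m0, h0, y, l0, hy⟩, rfl⟩
  obtain ⟨L, ⟨hchain, hmemL, ⟨hd, hhd, hdB⟩, ⟨e, hle, heB⟩⟩, hlen⟩ := Nat.find_spec hex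
  have hmin : ∀ L' : List V, L'.length < L.length →
      ¬ (L'.Chain' G.Adj ∧ (∀ v ∈ L', ∃ t, v ∈ B t) ∧
        (∃ h, L'.head? = some h ∧ h ∈ B z0) ∧
        (∃ e, L'.getLast? = some e ∧ e ∈ B z1)) := by
    intro L' hlt hOk'
    exact Nat.find_min hex (by omega) ⟨L', hOk', rfl⟩
  clear hlen
  have hLne : L ≠ [] := by intro h; rw [h] at hhd; simp at hhd
  have hNpos : 0 < L.length := List.length_pos_iff.mpr hLne
  have hget0 : L[0]'hNpos = hd := by
    have h1 : L[0]? = some hd := by rw [← List.head?_eq_getElem?]; exact hhd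
    have h2 : L[0]? = some (L[0]'hNpos) := List.getElem?_eq_getElem hNpos
    rw [h1] at h2; exact (Option.some.injEq _ _ ▸ h2).symm
  have hgetN : L[L.length - 1]'(by omega) = e := by
    have h1 : L[L.length - 1]? = some e := by
      rw [← List.getLast?_eq_getElem?]; exact hle
    have h2 : L[L.length - 1]? = some (L[L.length - 1]'(by omega)) :=
      List.getElem?_eq_getElem (by omega)
    rw [h1] at h2; exact (Option.some.injEq _ _ ▸ h2).symm
  have hadjL : ∀ i, (hi : i + 1 < L.length) → G.Adj (L[i]'(by omega)) (L[i+1]'hi) := by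
    intro i hi
    have := List.isChain_iff_getElem.mp hchain i (by omega)
    simpa [List.get_eq_getElem] using this
  -- surgery : minimality implies no repeats & no chords
  have hlastTake : ∀ i, (hi : i < L.length) → (L.take (i+1)).getLast? = some (L[i]'hi) := by
    intro i hi
    rw [List.getLast?_take]
    simp [List.getElem?_eq_getElem hi]
  have hheadTake : ∀ i, (L.take (i+1)).head? = some hd := by
    intro i
    rw [List.head?_take]
    simp [hhd]
  have hlastDrop : ∀ m, m < L.length → (L.drop m).getLast? = some e := by
    intro m hm
    rw [List.getLast?_eq_getElem?, List.getElem?_drop, List.length_drop]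
    have : m + (L.length - m - 1) = L.length - 1 := by omega
    rw [this, ← List.getLast?_eq_getElem?]
    exact hle
  have surgery : ∀ i j, (hij : i < j) → (hjL : j < L.length) →
      (L[i]'(by omega)) ≠ L[j] ∧ (i + 1 < j → ¬ G.Adj (L[i]'(by omega)) L[j]) := by
    intro i j hij hjL
    constructor
    · intro heq
      refine hmin (L.take (i+1) ++ L.drop (j+1)) ?_ ⟨?_, ?_, ?_, ?_⟩
      · rw [List.length_append, List.length_take, List.length_drop]
        omega
      · apply List.isChain_append.mpr
        refine ⟨hchain.take _, hchain.drop _, ?_⟩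
        intro x hx y' hy'
        rw [hlastTake i (by omega)] at hx
        rw [List.head?_drop] at hy'
        rcases Nat.lt_or_ge (j+1) L.length with hlt | hge
        · rw [List.getElem?_eq_getElem hlt] at hy'
          simp only [Option.mem_def, Option.some.injEq] at hx hy'
          rw [← hx, ← hy', heq]
          exact hadjL j hlt
        · rw [List.getElem?_eq_none (by omega)] at hy'
          simp at hy'
      · intro v hv
        rcases List.mem_append.mp hv with h | h
        · exact hmemL v ((List.take_sublist _ _).mem h)
        · exact hmemL v ((List.drop_sublist _ _).mem h)
      · refine ⟨hd, ?_, hdB⟩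
        rw [List.head?_append, hheadTake]
        rfl
      · refine ⟨e, ?_, heB⟩
        rw [List.getLast?_append]
        rcases Nat.lt_or_ge (j+1) L.length with hlt | hge
        · rw [hlastDrop _ hlt]
          rfl
        · have hdrop : L.drop (j+1) = [] := List.drop_eq_nil_of_le (by omega)
          rw [hdrop]
          have hje : j = L.length - 1 := by omega
          have hLj : L[j]'hjL = e := by
            simp only [hje]
            exact hgetN
          simp only [List.getLast?_nil, Option.none_or]
          rw [hlastTake i (by omega), heq, hLj]
    · intro hij2 hA
      refine hmin (L.take (i+1) ++ L.drop j) ?_ ⟨?_, ?_, ?_, ?_⟩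
      · rw [List.length_append, List.length_take, List.length_drop]
        omega
      · apply List.isChain_append.mpr
        refine ⟨hchain.take _, hchain.drop _, ?_⟩
        intro x hx y' hy'
        rw [hlastTake i (by omega)] at hx
        rw [List.head?_drop, List.getElem?_eq_getElem hjL] at hy'
        simp only [Option.mem_def, Option.some.injEq] at hx hy'
        rw [← hx, ← hy']
        exact hA
      · intro v hv
        rcases List.mem_append.mp hv with h | h
        · exact hmemL v ((List.take_sublist _ _).mem h)
        · exact hmemL v ((List.drop_sublist _ _).mem h)
      · refine ⟨hd, ?_, hdB⟩
        rw [List.head?_append, hheadTake]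
        rfl
      · refine ⟨e, ?_, heB⟩
        rw [List.getLast?_append, hlastDrop _ (by omega)]
        rfl
  -- the level function
  have levB : ∀ (v : V) (s t : Fin k), v ∈ B s → v ∈ B t → s = t := by
    intro v s t hs ht
    by_contra hne
    exact Set.disjoint_left.mp (hdisj _ _ hne) hs ht
  have hlev : ∃ lev : V → Fin k, ∀ (v : V) (t : Fin k), v ∈ B t → lev v = t := by
    refine ⟨fun v => if h : ∃ t, v ∈ B t then h.choose else z0, ?_⟩
    intro v t hv
    have h : ∃ t, v ∈ B t := ⟨t, hv⟩
    simp only [dif_pos h]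
    exact levB v _ _ h.choose_spec hv
  obtain ⟨lev, levMem⟩ := hlev
  have hstep : ∀ i, (hi : i + 1 < L.length) →
      (lev (L[i+1]'hi)).val ≤ (lev (L[i]'(by omega))).val + 1 := by
    intro i hi
    obtain ⟨t, ht⟩ := hmemL _ (List.getElem_mem (l := L) (n := i) (by omega))
    obtain ⟨t', ht'⟩ := hmemL _ (List.getElem_mem (l := L) (n := i+1) hi)
    rw [levMem _ _ ht, levMem _ _ ht']
    by_cases h : t = t'
    · omega
    · have := (hadj t t' h).mp ⟨_, ht, _, ht', hadjL i hi⟩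
      omega
  have hbound := idxBound (fun v => (lev v).val) L hstep
  have hk_le : k ≤ L.length := by
    have h0 : lev (L[0]'hNpos) = z0 := levMem _ _ (by rw [hget0]; exact hdB)
    have h1 : lev (L[L.length - 1]'(Nat.sub_lt hNpos Nat.one_pos)) = z1 :=
      levMem _ _ (by rw [hgetN]; exact heB)
    have hb2 : (lev (L[L.length - 1]'(Nat.sub_lt hNpos Nat.one_pos))).val ≤
        (lev (L[0]'hNpos)).val + (L.length - 1) :=
      hbound (L.length - 1) (Nat.sub_lt hNpos Nat.one_pos)
    rw [h0, h1] at hb2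
    have hb3 : k - 1 ≤ 0 + (L.length - 1) := hb2
    omega
  refine ⟨fun j => L[j.val]'(lt_of_lt_of_le j.isLt hk_le), ?_, ?_, ?_⟩
  · intro j
    exact hmemL _ (List.getElem_mem _)
  · intro s t h
    rcases lt_trichotomy s.val t.val with hst | hst | hst
    · exact absurd h ((surgery s.val t.val hst (lt_of_lt_of_le t.isLt hk_le)).1)
    · exact Fin.ext hst
    · exact absurd h.symm ((surgery t.val s.val hst (lt_of_lt_of_le s.isLt hk_le)).1)
  · have key : ∀ s t : Fin k, s.val < t.val →
        (G.Adj (L[s.val]'(lt_of_lt_of_le s.isLt hk_le))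
          (L[t.val]'(lt_of_lt_of_le t.isLt hk_le)) ↔ s.val + 1 = t.val) := by
      intro s t hst
      constructor
      · intro hA
        by_contra hne
        exact (surgery s.val t.val hst (lt_of_lt_of_le t.isLt hk_le)).2 (by omega) hA
      · intro h
        have hlt : s.val + 1 < L.length := h ▸ lt_of_lt_of_le t.isLt hk_le
        have := hadjL s.val hlt
        convert this using 2
        omega
    intro s t
    rcases lt_trichotomy s.val t.val with hst | hst | hst
    · rw [key s t hst]
      omega
    · have : s = t := Fin.ext hst
      subst this
      constructor
      · intro hA
        exact absurd hA (G.irrefl)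
      · intro h
        omega
    · rw [G.adj_comm, key t s hst]
      omega

theorem stmt3 {V : Type*} (G : SimpleGraph V) (n : ℕ) (l : Fin n → ℕ) :
    (∃ f : (Σ i : Fin n, Fin (l i)) ↪ V,
        ∀ a b, G.Adj (f a) (f b) ↔ (linForest n l).Adj a b) ↔
      IsInducedMinor G (linForest n l) := by
  constructor
  · rintro ⟨f, hf⟩
    refine ⟨fun w => {f w}, ?_, ?_, ?_⟩
    · intro w
      haveI : Nonempty ({f w} : Set V) := ⟨⟨f w, rfl⟩⟩
      refine ⟨fun a b => ?_⟩
      have : a = b := Subtype.ext (a.2.trans b.2.symm)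
      subst this
      exact SimpleGraph.Reachable.refl _
    · intro w w' hne
      simpa using f.injective.ne hne
    · intro w w' _
      constructor
      · intro h
        exact ⟨f w, rfl, f w', rfl, (hf w w').mpr h⟩
      · rintro ⟨a, rfl, b, rfl, hab⟩
        exact (hf w w').mp hab
  · rintro ⟨B, hconn, hdisj, hadj⟩
    have main : ∀ i : Fin n, ∃ g : Fin (l i) → V,
        (∀ j, ∃ t, g j ∈ B ⟨i, t⟩) ∧ Function.Injective g ∧
        (∀ s t, G.Adj (g s) (g t) ↔ (s.val + 1 = t.val ∨ t.val + 1 = s.val)) := by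
      intro i
      by_cases hk : 0 < l i
      · refine pathLemma hk (fun j => B ⟨i, j⟩) (fun t => hconn _) ?_ ?_
        · intro s t hst
          exact hdisj _ _ (fun h => hst (by
            have := (Sigma.mk.inj_iff.mp h).2
            exact eq_of_heq this))
        · intro s t hst
          have hne : (⟨i, s⟩ : Σ i, Fin (l i)) ≠ ⟨i, t⟩ := by
            intro h
            exact hst (eq_of_heq (Sigma.mk.inj_iff.mp h).2)
          rw [← hadj _ _ hne, linAdj]
          simp
      · exact ⟨fun j => absurd j.isLt (by omega),
          fun j => absurd j.isLt (by omega),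
          fun a => absurd a.isLt (by omega),
          fun s => absurd s.isLt (by omega)⟩
    choose g hmem hinj hadjg using main
    have hfinj : Function.Injective (fun p : Σ i, Fin (l i) => g p.1 p.2) := by
      rintro ⟨i, j⟩ ⟨i', j'⟩ h
      simp only at h
      by_cases hii : i = i'
      · subst hii
        have := hinj i h
        subst this; rfl
      · exfalso
        obtain ⟨t, ht⟩ := hmem i j
        obtain ⟨t', ht'⟩ := hmem i' j'
        have hne : (⟨i, t⟩ : Σ i, Fin (l i)) ≠ ⟨i', t'⟩ := by
          intro hh; exact hii (congrArg Sigma.fst hh)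
        exact Set.disjoint_left.mp (hdisj _ _ hne) ht (h ▸ ht')
    refine ⟨⟨fun p => g p.1 p.2, hfinj⟩, ?_⟩
    rintro ⟨i, j⟩ ⟨i', j'⟩
    by_cases hii : i = i'
    · subst hii
      rw [linAdj]
      simp only [Function.Embedding.coeFn_mk]
      rw [hadjg i j j']
      simp
    · rw [linAdj]
      simp only [Function.Embedding.coeFn_mk]
      constructor
      · intro hA
        exfalso
        obtain ⟨t, ht⟩ := hmem i j
        obtain ⟨t', ht'⟩ := hmem i' j'
        have hne : (⟨i, t⟩ : Σ i, Fin (l i)) ≠ ⟨i', t'⟩ := by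
          intro hh; exact hii (congrArg Sigma.fst hh)
        have := (hadj _ _ hne).mpr ⟨_, ht, _, ht', hA⟩
        rw [linAdj] at this
        exact hii this.1
      · rintro ⟨h, -⟩
        exact absurd h hii
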